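/- For all integers n ≥ k ≥ 1, the partial Bell polynomial satisfies B_{n,k}(1/2, 1/3, ..., 1/(n−k+2)) = (n!/(n+k)!) · Σ_{i=0}^{k} (−1)^{k−i} · C(n+k, k−i) · S(n+i, i), where S denotes Stirling numbers of the second kind. -/

import Mathlib

open Finset

/-- Stirling numbers of the second kind `S(n,k)`. -/
def stirling : ℕ → ℕ → ℕ
  | 0, 0 => 1
  | 0, _ + 1 => 0
  | _ + 1, 0 => 0
  | n + 1, k + 1 => (k + 1) * stirling n (k + 1) + stirling n k

/-- The partial Bell polynomials `B_{n,k}(x₁, …, x_{n-k+1})`. -/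
noncomputable def bellPoly (n k : ℕ) (x : ℕ → ℝ) : ℝ :=
  ∑ l ∈ (Fintype.piFinset fun _ : Fin n => Finset.range (n + 1)) |>.filter
      (fun l => (∑ i, (i.1 + 1) * l i) = n ∧ (∑ i, l i) = k),
    (n.factorial : ℝ) / (∏ i, ((l i).factorial : ℝ)) *
      ∏ i, (x (i.1 + 1) / ((i.1 + 1).factorial : ℝ)) ^ l i

noncomputable def T (m j : ℕ) : ℝ := ∑ i ∈ range (j+1), (-1:ℝ)^i * (j.choose i) * (i:ℝ)^m
noncomputable def W (m j : ℕ) : ℝ := ∑ i ∈ range (j+1), (-1:ℝ)^i * (j.choose i) * ((i:ℝ)+1)^m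

lemma shiftT (m j : ℕ) : ∑ i ∈ range (j+1), (-1:ℝ)^i * (j.choose (i+1)) * ((i:ℝ)+1)^m
    = (0:ℝ)^m - T m j := by
  have h1 : T m j = ∑ i ∈ range j, -((-1:ℝ)^i * (j.choose (i+1)) * ((i:ℝ)+1)^m) + (0:ℝ)^m := by
    rw [T, Finset.sum_range_succ']
    congr 1
    · refine Finset.sum_congr rfl fun i _ => ?_
      push_cast; ring
    · simp
  rw [Finset.sum_range_succ, Nat.choose_succ_self, h1, Finset.sum_neg_distrib]
  push_cast; ring

lemma hT1 (m j : ℕ) : T m (j+1) = T m j - W m j := by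
  have : T m (j+1) = ∑ i ∈ range (j+1),
      ((-1:ℝ)^(i+1) * (((j+1).choose (i+1) : ℕ):ℝ) * (((i+1:ℕ)):ℝ)^m)
      + (-1:ℝ)^0 * (((j+1).choose 0 : ℕ):ℝ) * ((0:ℕ):ℝ)^m := by
    rw [T, Finset.sum_range_succ']
  rw [this]
  have hcong : ∀ i ∈ range (j+1),
      (-1:ℝ)^(i+1) * (((j+1).choose (i+1) : ℕ):ℝ) * (((i+1:ℕ)):ℝ)^m
      = -((-1:ℝ)^i * (j.choose i : ℝ) * ((i:ℝ)+1)^m) +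
        -((-1:ℝ)^i * (j.choose (i+1) : ℝ) * ((i:ℝ)+1)^m) := by
    intro i _
    rw [Nat.choose_succ_succ]
    push_cast; ring
  rw [Finset.sum_congr rfl hcong, Finset.sum_add_distrib, Finset.sum_neg_distrib,
    Finset.sum_neg_distrib, shiftT]
  simp only [Nat.choose_zero_right, Nat.cast_one, one_mul, mul_one, pow_zero]
  rw [W]
  push_cast
  ring

lemma hT2 (m j : ℕ) : T (m+1) (j+1) = -((j:ℝ)+1) * W m j := by
  have : T (m+1) (j+1) = ∑ i ∈ range (j+1),
      ((-1:ℝ)^(i+1) * (((j+1).choose (i+1) : ℕ):ℝ) * (((i+1:ℕ)):ℝ)^(m+1))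
      + (-1:ℝ)^0 * (((j+1).choose 0 : ℕ):ℝ) * ((0:ℕ):ℝ)^(m+1) := by
    rw [T, Finset.sum_range_succ']
  rw [this]
  have hcong : ∀ i ∈ range (j+1),
      (-1:ℝ)^(i+1) * (((j+1).choose (i+1) : ℕ):ℝ) * (((i+1:ℕ)):ℝ)^(m+1)
      = -((j:ℝ)+1) * ((-1:ℝ)^i * (j.choose i : ℝ) * ((i:ℝ)+1)^m) := by
    intro i _
    have h := Nat.add_one_mul_choose_eq j i
    have h' : ((j:ℝ)+1) * (j.choose i : ℝ) = (((j+1).choose (i+1) : ℕ):ℝ) * ((i:ℝ)+1) := by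
      exact_mod_cast congrArg (Nat.cast : ℕ → ℝ) h
    push_cast
    push_cast at h'
    calc (-1:ℝ)^(i+1) * ((j+1).choose (i+1) : ℝ) * ((i:ℝ)+1)^(m+1)
        = -((-1:ℝ)^i * (((j+1).choose (i+1) : ℝ) * ((i:ℝ)+1)) * ((i:ℝ)+1)^m) := by ring
      _ = -((-1:ℝ)^i * (((j:ℝ)+1) * (j.choose i : ℝ)) * ((i:ℝ)+1)^m) := by rw [← h']
      _ = -((j:ℝ)+1) * ((-1:ℝ)^i * (j.choose i : ℝ) * ((i:ℝ)+1)^m) := by ring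
  rw [Finset.sum_congr rfl hcong, ← Finset.mul_sum, ← W]
  norm_num

lemma stirling_alt (m : ℕ) : ∀ j, ((Nat.factorial j : ℝ)) * stirling m j = (-1:ℝ)^j * T m j := by
  induction m with
  | zero =>
    intro j
    have hT : T 0 j = if j = 0 then 1 else 0 := by
      rw [T]
      have h := Int.alternating_sum_range_choose (n := j)
      have h2 : ((∑ i ∈ range (j + 1), (-1:ℤ) ^ i * ↑(j.choose i) : ℤ) : ℝ)
          = ((if j = 0 then 1 else 0 : ℤ) : ℝ) := by rw [h]
      push_cast at h2
      simpa using h2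
    rw [hT]
    cases j with
    | zero => simp [stirling]
    | succ j => simp [stirling]
  | succ m ih =>
    intro j
    cases j with
    | zero => simp [stirling, T]
    | succ j =>
      have e : stirling (m+1) (j+1) = (j + 1) * stirling m (j + 1) + stirling m j := rfl
      rw [e, hT2 m j]
      have i1 := ih (j+1)
      have i2 := ih j
      rw [hT1 m j] at i1
      have f1 : ((Nat.factorial (j+1) : ℝ)) = ((j:ℝ)+1) * (Nat.factorial j : ℝ) := by
        rw [Nat.factorial_succ]; push_cast; ring
      calc ((Nat.factorial (j+1) : ℝ)) * (((j + 1) * stirling m (j + 1) + stirling m j : ℕ) : ℝ)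
          = ((j:ℝ)+1) * ((Nat.factorial (j+1) : ℝ) * (stirling m (j+1) : ℝ))
            + ((j:ℝ)+1) * ((Nat.factorial j : ℝ) * (stirling m j : ℝ)) := by
            rw [f1]; push_cast; ring
        _ = ((j:ℝ)+1) * ((-1:ℝ)^(j+1) * (T m j - W m j)) + ((j:ℝ)+1) * ((-1:ℝ)^j * T m j) := by
            rw [i1, i2]
        _ = (-1:ℝ)^(j+1) * (-((j:ℝ)+1) * W m j) := by rw [pow_succ]; ring

lemma algmap (q : ℚ) : algebraMap ℚ ℝ q = (q : ℝ) := rfl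

-- coeff of (exp - 1)^j
lemma coeff_exp_sub_one_pow (m j : ℕ) :
    PowerSeries.coeff (R := ℝ) m ((PowerSeries.exp ℝ - 1)^j)
      = (∑ i ∈ range (j+1), (-1:ℝ)^i * (j.choose i) * (i:ℝ)^m) * (-1:ℝ)^j / (m.factorial : ℝ) := by
  rw [sub_pow]
  rw [map_sum]
  rw [Finset.sum_mul, Finset.sum_div]
  refine Finset.sum_congr rfl fun i hi => ?_
  rw [one_pow, mul_one]
  have h1 : (-1 : PowerSeries ℝ) = PowerSeries.C (R := ℝ) (-1) := by simp
  have h2 : ((j.choose i : ℕ) : PowerSeries ℝ) = PowerSeries.C (R := ℝ) ((j.choose i : ℕ) : ℝ) := by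
    simp [map_natCast]
  rw [h1, h2, ← map_pow]
  have h3 : PowerSeries.C (R := ℝ) ((-1:ℝ)^(i+j)) * PowerSeries.exp ℝ ^ i * PowerSeries.C (R := ℝ) ((j.choose i : ℕ) : ℝ)
      = PowerSeries.C (R := ℝ) ((-1:ℝ)^(i+j) * ((j.choose i : ℕ) : ℝ)) * PowerSeries.exp ℝ ^ i := by
    rw [map_mul]; ring
  rw [h3, PowerSeries.coeff_C_mul, PowerSeries.exp_pow_eq_rescale_exp, PowerSeries.coeff_rescale,
    PowerSeries.coeff_exp, algmap]
  push_cast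
  rw [show (-1:ℝ)^(i+j) = (-1:ℝ)^i * (-1:ℝ)^j from pow_add _ _ _]
  ring

noncomputable def gps : PowerSeries ℝ := PowerSeries.exp ℝ - 1 - PowerSeries.X

lemma coeff_gps (m : ℕ) : PowerSeries.coeff (R := ℝ) m gps = if 2 ≤ m then (1:ℝ)/(m.factorial : ℝ) else 0 := by
  rw [gps, map_sub, map_sub, PowerSeries.coeff_exp, algmap, PowerSeries.coeff_one, PowerSeries.coeff_X]
  match m with
  | 0 => norm_num
  | 1 => norm_num
  | (m+2) => push_cast; norm_num

lemma coeff_gps_pow (n k : ℕ) (hjk : k ≤ n) :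
    PowerSeries.coeff (R := ℝ) (n+k) (gps ^ k)
      = ∑ j ∈ range (k+1), (-1:ℝ)^(k-j) * (k.choose j)
          * ((∑ i ∈ range (j+1), (-1:ℝ)^i * (j.choose i) * (i:ℝ)^(n+j)) * (-1:ℝ)^j / ((n+j).factorial : ℝ)) := by
  rw [gps, sub_sub, show (1 + PowerSeries.X : PowerSeries ℝ) = 1 + PowerSeries.X from rfl,
    show PowerSeries.exp ℝ - (1 + PowerSeries.X) = (PowerSeries.exp ℝ - 1) - PowerSeries.X by ring,
    sub_pow, map_sum]
  refine Finset.sum_congr rfl fun j hj => ?_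
  rw [mem_range] at hj
  have hjk' : j ≤ k := by omega
  have h1 : (-1 : PowerSeries ℝ) = PowerSeries.C (R := ℝ) (-1) := by simp
  have h2 : ((k.choose j : ℕ) : PowerSeries ℝ) = PowerSeries.C (R := ℝ) ((k.choose j : ℕ) : ℝ) := by
    simp [map_natCast]
  rw [h1, h2, ← map_pow]
  have h3 : PowerSeries.C (R := ℝ) ((-1:ℝ)^(j+k)) * (PowerSeries.exp ℝ - 1) ^ j * PowerSeries.X ^ (k-j) * PowerSeries.C (R := ℝ) ((k.choose j : ℕ) : ℝ)
      = PowerSeries.C (R := ℝ) ((-1:ℝ)^(j+k) * ((k.choose j : ℕ) : ℝ)) * ((PowerSeries.exp ℝ - 1) ^ j * PowerSeries.X ^ (k-j)) := by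
    rw [map_mul]; ring
  rw [h3, PowerSeries.coeff_C_mul,
    show n + k = (n+j) + (k-j) by omega, PowerSeries.coeff_mul_X_pow,
    coeff_exp_sub_one_pow]
  have hsg : (-1:ℝ)^(j+k) = (-1:ℝ)^(k-j) := by
    rw [show j + k = (k-j) + 2*j by omega, pow_add, pow_mul]
    norm_num
  rw [hsg]

def phi (n : ℕ) (l' : Fin n → ℕ) : ℕ → ℕ :=
  fun m => if h : 2 ≤ m ∧ m - 2 < n then l' ⟨m - 2, h.2⟩ else 0

lemma phi_apply (n : ℕ) (l' : Fin n → ℕ) (i : Fin n) : phi n l' (i.1 + 2) = l' i := by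
  have h : 2 ≤ i.1 + 2 ∧ i.1 + 2 - 2 < n := by simp [i.2]
  rw [phi, dif_pos h]
  congr 1

lemma phi_zero (n : ℕ) (l' : Fin n → ℕ) (m : ℕ) (hm : ¬ (2 ≤ m ∧ m - 2 < n)) :
    phi n l' m = 0 := dif_neg hm

lemma reindex_prod {M : Type*} [CommMonoid M] (n N : ℕ) (hN : n + 1 ≤ N) (l' : Fin n → ℕ)
    (G : ℕ → ℕ → M) (hG : ∀ m, G m 0 = 1) :
    ∏ m ∈ Icc 2 N, G m (phi n l' m) = ∏ i : Fin n, G (i.1 + 2) (l' i) := by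
  rw [← Finset.prod_subset (s₁ := Icc 2 (n+1)) (Finset.Icc_subset_Icc_right hN)
    (fun x hx hx' => by
      rw [mem_Icc] at hx hx'
      rw [phi_zero _ _ _ (by omega), hG])]
  calc ∏ m ∈ Icc 2 (n+1), G m (phi n l' m)
      = ∏ i ∈ range n, G (i+2) (phi n l' (i+2)) := by
        refine Finset.prod_nbij' (fun m => m - 2) (fun i => i + 2) ?_ ?_ ?_ ?_ ?_ <;>
          intro a ha <;> simp only [mem_Icc, mem_range] at ha ⊢
        · omega
        · omega
        · omega
        · omega
        · have h2 : a - 2 + 2 = a := by omega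
          rw [h2]
    _ = ∏ i : Fin n, G (i.1+2) (phi n l' (i.1+2)) := (Fin.prod_univ_eq_prod_range _ n).symm
    _ = ∏ i : Fin n, G (i.1 + 2) (l' i) := Fintype.prod_congr _ _ fun i => by rw [phi_apply]

lemma reindex_sum (n N : ℕ) (hN : n + 1 ≤ N) (l' : Fin n → ℕ)
    (G : ℕ → ℕ → ℕ) (hG : ∀ m, G m 0 = 0) :
    ∑ m ∈ Icc 2 N, G m (phi n l' m) = ∑ i : Fin n, G (i.1 + 2) (l' i) := by
  rw [← Finset.sum_subset (s₁ := Icc 2 (n+1)) (Finset.Icc_subset_Icc_right hN)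
    (fun x hx hx' => by
      rw [mem_Icc] at hx hx'
      rw [phi_zero _ _ _ (by omega), hG])]
  calc ∑ m ∈ Icc 2 (n+1), G m (phi n l' m)
      = ∑ i ∈ range n, G (i+2) (phi n l' (i+2)) := by
        refine Finset.sum_nbij' (fun m => m - 2) (fun i => i + 2) ?_ ?_ ?_ ?_ ?_ <;>
          intro a ha <;> simp only [mem_Icc, mem_range] at ha ⊢
        · omega
        · omega
        · omega
        · omega
        · have h2 : a - 2 + 2 = a := by omega
          rw [h2]
    _ = ∑ i : Fin n, G (i.1+2) (phi n l' (i.1+2)) := (Fin.sum_univ_eq_sum_range _ n).symm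
    _ = ∑ i : Fin n, G (i.1 + 2) (l' i) := Fintype.sum_congr _ _ fun i => by rw [phi_apply]

noncomputable def Sfin (N : ℕ) : PowerSeries ℝ :=
  ∑ i ∈ Icc 2 N, PowerSeries.C (R := ℝ) ((1:ℝ)/(i.factorial : ℝ)) * PowerSeries.X ^ i

lemma coeff_Sfin (N m : ℕ) :
    PowerSeries.coeff (R := ℝ) m (Sfin N) = if m ∈ Icc 2 N then (1:ℝ)/(m.factorial : ℝ) else 0 := by
  rw [Sfin, map_sum]
  rw [Finset.sum_congr rfl (fun i _ => by
    rw [PowerSeries.coeff_C_mul, PowerSeries.coeff_X_pow])]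
  simp only [mul_ite, mul_one, mul_zero]
  rw [Finset.sum_ite_eq (Icc 2 N) m (fun i => (1:ℝ)/(i.factorial : ℝ))]

lemma coeff_pow_eq (n k : ℕ) :
    PowerSeries.coeff (R := ℝ) (n+k) (gps ^ k) = PowerSeries.coeff (R := ℝ) (n+k) ((Sfin (n+k)) ^ k) := by
  rw [PowerSeries.coeff_pow, PowerSeries.coeff_pow]
  refine Finset.sum_congr rfl fun l hl => Finset.prod_congr rfl fun i hi => ?_
  rw [Finset.mem_finsuppAntidiag] at hl
  have hle : l i ≤ n + k := by
    rw [← hl.1]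
    exact Finset.single_le_sum (f := fun j => l j) (fun j _ => Nat.zero_le _) hi
  rw [coeff_gps, coeff_Sfin]
  simp only [mem_Icc]
  by_cases h2 : 2 ≤ l i
  · rw [if_pos h2, if_pos ⟨h2, hle⟩]
  · rw [if_neg h2, if_neg (fun hc => h2 hc.1)]

lemma Sfin_pow (n k : ℕ) :
    PowerSeries.coeff (R := ℝ) (n+k) ((Sfin (n+k)) ^ k)
      = ∑ l ∈ Finset.piAntidiag (Icc 2 (n+k)) k,
          (if ∑ i ∈ Icc 2 (n+k), i * l i = n + k then
            (Nat.multinomial (Icc 2 (n+k)) l : ℝ) * ∏ i ∈ Icc 2 (n+k), ((1:ℝ)/(i.factorial : ℝ)) ^ (l i)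
          else 0) := by
  rw [Sfin, Finset.sum_pow_eq_sum_piAntidiag, map_sum]
  refine Finset.sum_congr rfl fun l hl => ?_
  have h1 : ∏ i ∈ Icc 2 (n+k), (PowerSeries.C (R := ℝ) ((1:ℝ)/(i.factorial : ℝ)) * PowerSeries.X ^ i) ^ (l i)
      = PowerSeries.C (R := ℝ) (∏ i ∈ Icc 2 (n+k), ((1:ℝ)/(i.factorial : ℝ)) ^ (l i))
        * PowerSeries.X ^ (∑ i ∈ Icc 2 (n+k), i * l i) := by
    rw [map_prod, ← Finset.prod_pow_eq_pow_sum, ← Finset.prod_mul_distrib]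
    refine Finset.prod_congr rfl fun i _ => ?_
    rw [mul_pow, map_pow, ← pow_mul, mul_comm (i) (l i)]
  rw [h1]
  have h2 : (Nat.multinomial (Icc 2 (n+k)) l : PowerSeries ℝ)
      = PowerSeries.C (R := ℝ) ((Nat.multinomial (Icc 2 (n+k)) l : ℕ) : ℝ) := by
    simp [map_natCast]
  rw [h2, ← mul_assoc, ← map_mul, PowerSeries.coeff_C_mul, PowerSeries.coeff_X_pow]
  by_cases hc : ∑ i ∈ Icc 2 (n+k), i * l i = n + k
  · rw [if_pos hc, if_pos hc.symm, mul_one]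
  · rw [if_neg hc, if_neg (fun hc2 => hc hc2.symm), mul_zero]

lemma key_support (n k : ℕ) (hk : 1 ≤ k) (l : ℕ → ℕ)
    (hsupp : ∀ m, l m ≠ 0 → m ∈ Icc 2 (n+k))
    (hsum : ∑ m ∈ Icc 2 (n+k), l m = k)
    (hw : ∑ m ∈ Icc 2 (n+k), m * l m = n + k) :
    ∀ m, n + 2 ≤ m → l m = 0 := by
  intro m hm
  by_contra h0
  have hmem : m ∈ Icc 2 (n+k) := hsupp m h0
  have hsplit : ∑ x ∈ Icc 2 (n+k), x * l x
      = ∑ x ∈ Icc 2 (n+k), (x-2) * l x + ∑ x ∈ Icc 2 (n+k), 2 * l x := by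
    rw [← Finset.sum_add_distrib]
    refine Finset.sum_congr rfl fun x hx => ?_
    rw [mem_Icc] at hx
    rw [← add_mul, Nat.sub_add_cancel hx.1]
  have h2k : ∑ x ∈ Icc 2 (n+k), 2 * l x = 2 * k := by rw [← Finset.mul_sum, hsum]
  have hge : (m-2) * l m ≤ ∑ x ∈ Icc 2 (n+k), (x-2) * l x :=
    Finset.single_le_sum (f := fun x => (x-2) * l x) (fun x _ => Nat.zero_le _) hmem
  have h1 : 1 ≤ l m := Nat.pos_of_ne_zero h0
  have h3 : n ≤ (m-2) * l m := by
    calc n = n * 1 := (mul_one n).symm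
    _ ≤ (m-2) * l m := Nat.mul_le_mul (by omega) h1
  omega

def psi (n : ℕ) (l : ℕ → ℕ) : Fin n → ℕ := fun i => l (i.1 + 2)

lemma phi_psi (n k : ℕ) (hk : 1 ≤ k) (l : ℕ → ℕ)
    (hsupp : ∀ m, l m ≠ 0 → m ∈ Icc 2 (n+k))
    (hsum : ∑ m ∈ Icc 2 (n+k), l m = k)
    (hw : ∑ m ∈ Icc 2 (n+k), m * l m = n + k) :
    phi n (fun i : Fin n => l (i.1+2)) = l := by
  funext m
  by_cases hc : 2 ≤ m ∧ m - 2 < n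
  · rw [phi, dif_pos hc]
    show l ((m - 2) + 2) = l m
    exact congrArg l (by omega)
  · rw [phi, dif_neg hc]
    by_cases h2 : 2 ≤ m
    · exact (key_support n k hk l hsupp hsum hw m (by omega)).symm
    · by_contra h0
      have := hsupp m (fun he => h0 he.symm)
      rw [mem_Icc] at this
      omega

lemma psi_sums (n k : ℕ) (hk : 1 ≤ k) (l : ℕ → ℕ)
    (hsupp : ∀ m, l m ≠ 0 → m ∈ Icc 2 (n+k))
    (hsum : ∑ m ∈ Icc 2 (n+k), l m = k)
    (hw : ∑ m ∈ Icc 2 (n+k), m * l m = n + k) :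
    (∑ i : Fin n, l (i.1+2) = k) ∧ (∑ i : Fin n, (i.1+2) * l (i.1+2) = n + k) := by
  have hinv := phi_psi n k hk l hsupp hsum hw
  constructor
  · have h := reindex_sum n (n+k) (by omega) (fun i : Fin n => l (i.1+2))
      (fun m v => v) (fun m => rfl)
    rw [hinv] at h
    rw [← h, hsum]
  · have h := reindex_sum n (n+k) (by omega) (fun i : Fin n => l (i.1+2))
      (fun m v => m * v) (fun m => Nat.mul_zero m)
    rw [hinv] at h
    rw [← h, hw]

lemma bell_eq (n k : ℕ) (hk : 1 ≤ k) (hkn : k ≤ n) (x : ℕ → ℝ)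
    (hx : ∀ j : ℕ, x (j+1) / (((j+1).factorial : ℕ) : ℝ) = 1 / (((j+2).factorial : ℕ) : ℝ)) :
    bellPoly n k x
      = (n.factorial : ℝ) / (k.factorial : ℝ) * PowerSeries.coeff (R := ℝ) (n+k) (gps ^ k) := by
  classical
  rw [coeff_pow_eq, Sfin_pow, bellPoly]
  have hrhs : (n.factorial : ℝ) / (k.factorial : ℝ) *
      (∑ l ∈ Finset.piAntidiag (Icc 2 (n+k)) k,
        (if ∑ i ∈ Icc 2 (n+k), i * l i = n + k then
          (Nat.multinomial (Icc 2 (n+k)) l : ℝ) * ∏ i ∈ Icc 2 (n+k), ((1:ℝ)/(i.factorial : ℝ)) ^ (l i)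
        else 0))
      = ∑ l ∈ (Finset.piAntidiag (Icc 2 (n+k)) k).filter
            (fun l => ∑ i ∈ Icc 2 (n+k), i * l i = n + k),
          (n.factorial : ℝ) / (k.factorial : ℝ) *
            ((Nat.multinomial (Icc 2 (n+k)) l : ℝ) * ∏ i ∈ Icc 2 (n+k), ((1:ℝ)/(i.factorial : ℝ)) ^ (l i)) := by
    rw [Finset.sum_filter, Finset.mul_sum]
    exact Finset.sum_congr rfl fun l _ => by split <;> simp
  rw [hrhs]
  refine Finset.sum_nbij' (phi n) (psi n) ?_ ?_ ?_ ?_ ?_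
  · -- forward membership
    intro l' hl'
    rw [Finset.mem_filter, Fintype.mem_piFinset] at hl'
    obtain ⟨hpi, hwt, hs⟩ := hl'
    rw [Finset.mem_filter, Finset.mem_piAntidiag]
    have e1 : ∑ m ∈ Icc 2 (n+k), phi n l' m = ∑ i : Fin n, l' i :=
      reindex_sum n (n+k) (by omega) l' (fun m v => v) (fun m => rfl)
    have e2 : ∑ m ∈ Icc 2 (n+k), m * phi n l' m = ∑ i : Fin n, (i.1+2) * l' i :=
      reindex_sum n (n+k) (by omega) l' (fun m v => m * v) (fun m => Nat.mul_zero m)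
    refine ⟨⟨by rw [e1, hs], ?_⟩, ?_⟩
    · intro m hm
      by_cases hc : 2 ≤ m ∧ m - 2 < n
      · rw [mem_Icc]; omega
      · exact absurd (phi_zero n l' m hc) hm
    · rw [e2]
      have : ∑ i : Fin n, (i.1+2) * l' i = ∑ i : Fin n, ((i.1+1) * l' i) + ∑ i : Fin n, l' i := by
        rw [← Finset.sum_add_distrib]
        exact Finset.sum_congr rfl fun i _ => by ring
      rw [this, hwt, hs]
  · -- backward membership
    intro l hl
    rw [Finset.mem_filter, Finset.mem_piAntidiag] at hl
    obtain ⟨⟨hsum, hsupp'⟩, hP⟩ := hl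
    have hsupp : ∀ m, l m ≠ 0 → m ∈ Icc 2 (n+k) := hsupp'
    obtain ⟨hs, hw2⟩ := psi_sums n k hk l hsupp hsum hP
    rw [Finset.mem_filter, Fintype.mem_piFinset]
    simp only [psi]
    refine ⟨?_, ?_, hs⟩
    · intro i
      rw [Finset.mem_range]
      have hmem : (i.1+2) ∈ Icc 2 (n+k) := by rw [mem_Icc]; omega
      have hle : (i.1+2) * l (i.1+2) ≤ n + k := by
        rw [← hP]
        exact Finset.single_le_sum (f := fun m => m * l m) (fun m _ => Nat.zero_le _) hmem
      have : 2 * l (i.1+2) ≤ (i.1+2) * l (i.1+2) := Nat.mul_le_mul_right _ (by omega)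
      omega
    · have h3 : ∑ i : Fin n, (i.1+2) * l (i.1+2)
          = ∑ i : Fin n, ((i.1+1) * l (i.1+2)) + ∑ i : Fin n, l (i.1+2) := by
        rw [← Finset.sum_add_distrib]
        exact Finset.sum_congr rfl fun i _ => by ring
      omega
  · -- left inverse
    intro l' _
    funext i
    show phi n l' (i.1 + 2) = l' i
    exact phi_apply n l' i
  · -- right inverse
    intro l hl
    rw [Finset.mem_filter, Finset.mem_piAntidiag] at hl
    exact phi_psi n k hk l hl.1.2 hl.1.1 hl.2
  · -- value agreement
    intro l' hl'
    rw [Finset.mem_filter, Fintype.mem_piFinset] at hl'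
    obtain ⟨hpi, hwt, hs⟩ := hl'
    have hprod1 : ∏ m ∈ Icc 2 (n+k), ((1:ℝ)/(m.factorial : ℝ)) ^ (phi n l' m)
        = ∏ i : Fin n, ((1:ℝ)/(((i.1+2).factorial : ℕ) : ℝ)) ^ (l' i) :=
      reindex_prod n (n+k) (by omega) l' (fun m v => ((1:ℝ)/(m.factorial : ℝ)) ^ v)
        (fun m => pow_zero _)
    have hfact : ∏ m ∈ Icc 2 (n+k), (phi n l' m).factorial = ∏ i : Fin n, (l' i).factorial :=
      reindex_prod n (n+k) (by omega) l' (fun m v => v.factorial) (fun m => rfl)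
    have hsumphi : ∑ m ∈ Icc 2 (n+k), phi n l' m = k := by
      have := reindex_sum n (n+k) (by omega) l' (fun m v => v) (fun m => rfl)
      rw [this, hs]
    have hmult : ((Nat.multinomial (Icc 2 (n+k)) (phi n l') : ℕ) : ℝ)
        * ∏ i : Fin n, ((l' i).factorial : ℝ) = (k.factorial : ℝ) := by
      have hspec := Nat.multinomial_spec (Icc 2 (n+k)) (phi n l')
      rw [hfact, hsumphi] at hspec
      have := congrArg (fun z : ℕ => (z : ℝ)) hspec
      push_cast at this
      rw [← this]
      ring
    have hne : (∏ i : Fin n, ((l' i).factorial : ℝ)) ≠ 0 :=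
      Finset.prod_ne_zero_iff.mpr fun i _ => Nat.cast_ne_zero.mpr (Nat.factorial_ne_zero _)
    have hkne : (k.factorial : ℝ) ≠ 0 := Nat.cast_ne_zero.mpr (Nat.factorial_ne_zero _)
    have hb : ∏ i : Fin n, (x (i.1+1) / (((i.1+1).factorial : ℕ) : ℝ)) ^ l' i
        = ∏ i : Fin n, ((1:ℝ)/(((i.1+2).factorial : ℕ) : ℝ)) ^ l' i :=
      Finset.prod_congr rfl (fun i _ => by rw [hx i.1])
    rw [hb, hprod1]
    -- now: n!/∏fact * ∏base = n!/k! * (mult * ∏base)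
    have : ((Nat.multinomial (Icc 2 (n+k)) (phi n l') : ℕ) : ℝ)
        = (k.factorial : ℝ) / ∏ i : Fin n, ((l' i).factorial : ℝ) := by
      rw [eq_div_iff hne]; exact hmult
    rw [this]
    field_simp

/-- `B_{n,k}(1/2, 1/3, …, 1/(n-k+2)) = n!/(n+k)! ∑_{i=0}^k (-1)^{k-i} C(n+k, k-i) S(n+i, i)`. -/
theorem bellPoly_inv (n k : ℕ) (hk : 1 ≤ k) (hkn : k ≤ n) :
    bellPoly n k (fun i => 1 / (i + 1 : ℝ)) =
      (n.factorial : ℝ) / ((n + k).factorial : ℝ) *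
        ∑ i ∈ Finset.range (k + 1),
          (-1 : ℝ) ^ (k - i) * ((n + k).choose (k - i) : ℝ) * (stirling (n + i) i : ℝ) := by
  have hx : ∀ j : ℕ, (fun i : ℕ => 1 / ((i:ℝ) + 1)) (j+1) / (((j+1).factorial : ℕ) : ℝ)
      = 1 / (((j+2).factorial : ℕ) : ℝ) := by
    intro j
    show (1:ℝ)/(((j+1 : ℕ):ℝ)+1) / (((j+1).factorial : ℕ) : ℝ) = _
    have h1 : (((j+1).factorial : ℕ) : ℝ) ≠ 0 := Nat.cast_ne_zero.mpr (Nat.factorial_ne_zero _)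
    rw [Nat.factorial_succ (j+1)]
    push_cast
    field_simp
  rw [bell_eq n k hk hkn _ hx, coeff_gps_pow n k hkn, Finset.mul_sum, Finset.mul_sum]
  refine Finset.sum_congr rfl fun j hj => ?_
  rw [Finset.mem_range] at hj
  have hjk : j ≤ k := by omega
  have hst : (∑ i ∈ range (j+1), (-1:ℝ)^i * (j.choose i) * (i:ℝ)^(n+j)) * (-1:ℝ)^j
      = (j.factorial : ℝ) * (stirling (n+j) j : ℝ) := by
    have h := stirling_alt (n+j) j
    rw [T] at h
    rw [h]
    ring
  rw [show (∑ i ∈ range (j+1), (-1:ℝ)^i * (j.choose i) * (i:ℝ)^(n+j)) * (-1:ℝ)^j / (((n+j).factorial : ℕ) : ℝ)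
      = (j.factorial : ℝ) * (stirling (n+j) j : ℝ) / (((n+j).factorial : ℕ) : ℝ) from by rw [hst]]
  have hc1 : ((k.choose j : ℕ) : ℝ) * ((j.factorial : ℕ) : ℝ) * (((k-j).factorial : ℕ) : ℝ)
      = ((k.factorial : ℕ) : ℝ) := by
    exact_mod_cast congrArg (Nat.cast : ℕ → ℝ) (Nat.choose_mul_factorial_mul_factorial hjk)
  have hc2 : (((n+k).choose (k-j) : ℕ) : ℝ) * (((k-j).factorial : ℕ) : ℝ) * (((n+j).factorial : ℕ) : ℝ)
      = (((n+k).factorial : ℕ) : ℝ) := by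
    have h := Nat.choose_mul_factorial_mul_factorial (show k - j ≤ n + k by omega)
    rw [show n + k - (k - j) = n + j by omega] at h
    exact_mod_cast congrArg (Nat.cast : ℕ → ℝ) h
  have hcc : ((k.choose j : ℕ) : ℝ) * (j.factorial : ℝ) * ((n+k).factorial : ℝ)
      = (((n+k).choose (k-j) : ℕ) : ℝ) * (k.factorial : ℝ) * ((n+j).factorial : ℝ) := by
    rw [← hc2, ← hc1]; ring
  have hk1 : ((k.factorial : ℕ) : ℝ) ≠ 0 := Nat.cast_ne_zero.mpr (Nat.factorial_ne_zero _)
  have hk2 : (((n+j).factorial : ℕ) : ℝ) ≠ 0 := Nat.cast_ne_zero.mpr (Nat.factorial_ne_zero _)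
  have hk3 : (((n+k).factorial : ℕ) : ℝ) ≠ 0 := Nat.cast_ne_zero.mpr (Nat.factorial_ne_zero _)
  field_simp
  linear_combination (stirling (n+j) j : ℝ) * hcc
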